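/- Single-spin marginal for the general q-state Potts model: for x ∈ V and m ∈ {1,…,q}, π_{qβ,ĥ,q,V}(σ̂_x = m) = φ_{p,ĥ,q,G}( exp(β Σ_{i∈K_t} h_{i,m}) / Σ_{p=1}^q exp(β Σ_{i∈K_t} h_{i,p}) ), where K_t is the connected component of x under the general random-cluster measure. -/

import Mathlib

open Finset

noncomputable section

variable {V : Type}

/-- The spin value (±1) attached to a Boolean spin (`true ↔ +1`, `false ↔ -1`). -/
def spin (b : Bool) : ℝ := if b then 1 else -1

/-- The subgraph of `G` whose open edges are the edges in `F`. -/
def openSub (G : SimpleGraph V) (F : Finset (Sym2 V)) : SimpleGraph V where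
  Adj i j := G.Adj i j ∧ s(i, j) ∈ F
  symm := by
    constructor
    intro i j h
    exact ⟨h.1.symm, by rw [Sym2.eq_swap]; exact h.2⟩
  loopless := ⟨fun i h => G.loopless.1 i h.1⟩

instance [Fintype V] (H : SimpleGraph V) : Fintype H.ConnectedComponent := by
  classical exact Fintype.ofSurjective H.connectedComponentMk Quot.exists_rep

/-- The vertex set of a connected component, as a `Finset`. -/
def compSupp [Fintype V] (H : SimpleGraph V) (c : H.ConnectedComponent) : Finset V := by
  classical exact Finset.univ.filter fun v => H.connectedComponentMk v = c

/-- Kronecker delta `δ_{σ_i,σ_j}` of a configuration on an (unordered) edge. -/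
def eDelta {S : Type} [DecidableEq S] (σ : V → S) : Sym2 V → ℝ :=
  Sym2.lift ⟨fun i j => if σ i = σ j then 1 else 0, fun _ _ => by simp [eq_comm]⟩

/-- Product of spins `σ_i σ_j` on an (unordered) edge. -/
def eProd (σ : V → Bool) : Sym2 V → ℝ :=
  Sym2.lift ⟨fun i j => spin (σ i) * spin (σ j), fun _ _ => mul_comm _ _⟩

/-- The consistency indicator `Δ(σ,ω)`: equal to `1` iff `σ` is constant on
every open edge of the configuration `F`. -/
def Delta (G : SimpleGraph V) (F : Finset (Sym2 V)) (σ : V → Bool) : ℝ := by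
  classical exact if ∀ i j, G.Adj i j → s(i, j) ∈ F → σ i = σ j then 1 else 0

/-- The Bernoulli factor `B_J(ω) = ∏_{e open} p_e ∏_{e closed} (1-p_e)`. -/
def bern [Fintype V] [DecidableEq V] (G : SimpleGraph V) [DecidableRel G.Adj]
    (p : Sym2 V → ℝ) (F : Finset (Sym2 V)) : ℝ :=
  (∏ e ∈ F, p e) * ∏ e ∈ G.edgeFinset \ F, (1 - p e)

/-- The (unnormalized) `q`-state Potts Boltzmann weight at inverse temperature
`qβ`, with fields `ĥ = (h i r)`. -/
def pottsWq [Fintype V] [DecidableEq V] (G : SimpleGraph V) [DecidableRel G.Adj]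
    (q : ℕ) (β : ℝ) (J : Sym2 V → ℝ) (hh : V → Fin q → ℝ) (τ : V → Fin q) : ℝ :=
  Real.exp (-(q * β) *
    (-(∑ e ∈ G.edgeFinset, J e * eDelta τ e)
      - ∑ r : Fin q, ∑ i, hh i r / q * (if τ i = r then 1 else 0)))

/-- The general random-cluster weight
`B_{J,q}(ω) ∏_α Σ_{p=1}^q exp(β Σ_{i∈K_α} h_{i,p})`. -/
def grcW [Fintype V] [DecidableEq V] (G : SimpleGraph V) [DecidableRel G.Adj]
    (q : ℕ) (β : ℝ) (p : Sym2 V → ℝ) (hh : V → Fin q → ℝ) (F : Finset (Sym2 V)) : ℝ :=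
  bern G p F * ∏ c : (openSub G F).ConnectedComponent,
    ∑ r : Fin q, Real.exp (β * ∑ i ∈ compSupp (openSub G F) c, hh i r)

/-- Expectation of `f` under the general random-cluster measure. -/
def grcE [Fintype V] [DecidableEq V] (G : SimpleGraph V) [DecidableRel G.Adj]
    (q : ℕ) (β : ℝ) (p : Sym2 V → ℝ) (hh : V → Fin q → ℝ)
    (f : Finset (Sym2 V) → ℝ) : ℝ :=
  (∑ F ∈ G.edgeFinset.powerset, f F * grcW G q β p hh F) /
    ∑ F ∈ G.edgeFinset.powerset, grcW G q β p hh F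

/-- The component of `z` in the configuration `F`, as a `Finset`. -/
def Kcomp [Fintype V] [DecidableEq V] (G : SimpleGraph V) (F : Finset (Sym2 V))
    (z : V) : Finset V :=
  compSupp (openSub G F) ((openSub G F).connectedComponentMk z)

/-! ### Auxiliary lemmas -/

lemma aux_prod_sum {ι κ : Type} [Fintype ι] [Fintype κ] [DecidableEq ι] [DecidableEq κ]
    (f : ι → κ → ℝ) :
    ∏ c, ∑ r, f c r = ∑ ℓ : ι → κ, ∏ c, f c (ℓ c) := by
  classical
  rw [Finset.prod_univ_sum, Fintype.piFinset_univ]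

lemma aux_fixed {ι κ : Type} [Fintype ι] [Fintype κ] [DecidableEq ι] [DecidableEq κ]
    (f : ι → κ → ℝ) (c0 : ι) (m : κ) :
    ∑ ℓ : ι → κ, (if ℓ c0 = m then (1:ℝ) else 0) * ∏ c, f c (ℓ c)
      = f c0 m * ∏ c ∈ Finset.univ.erase c0, ∑ r, f c r := by
  classical
  set g : ι → κ → ℝ := fun c r => if c = c0 then (if r = m then f c r else 0) else f c r with hg
  have key : ∀ ℓ : ι → κ, (if ℓ c0 = m then (1:ℝ) else 0) * ∏ c, f c (ℓ c)
      = ∏ c, g c (ℓ c) := by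
    intro ℓ
    rw [← Finset.mul_prod_erase Finset.univ (fun c => g c (ℓ c)) (Finset.mem_univ c0),
        ← Finset.mul_prod_erase Finset.univ (fun c => f c (ℓ c)) (Finset.mem_univ c0)]
    have herase : ∏ c ∈ Finset.univ.erase c0, g c (ℓ c)
        = ∏ c ∈ Finset.univ.erase c0, f c (ℓ c) := by
      refine Finset.prod_congr rfl fun c hc => ?_
      simp [hg, Finset.ne_of_mem_erase hc]
    rw [herase]
    by_cases h : ℓ c0 = m <;> simp [hg, h, mul_assoc]
  rw [Finset.sum_congr rfl fun ℓ _ => key ℓ, ← aux_prod_sum,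
      ← Finset.mul_prod_erase Finset.univ (fun c => ∑ r, g c r) (Finset.mem_univ c0)]
  have h1 : ∑ r, g c0 r = f c0 m := by simp [hg]
  have h2 : ∏ c ∈ Finset.univ.erase c0, ∑ r, g c r
      = ∏ c ∈ Finset.univ.erase c0, ∑ r, f c r := by
    refine Finset.prod_congr rfl fun c hc => Finset.sum_congr rfl fun r _ => ?_
    simp [hg, Finset.ne_of_mem_erase hc]
  rw [h1, h2]

lemma mem_compSupp [Fintype V] {H : SimpleGraph V} {c : H.ConnectedComponent} {v : V} :
    v ∈ compSupp H c ↔ H.connectedComponentMk v = c := by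
  classical
  simp [compSupp]

open scoped Classical in
/-- The consistency indicator for general configurations. -/
def consInd {q : ℕ} (F : Finset (Sym2 V)) (τ : V → Fin q) : ℝ :=
  if ∀ ⦃i j : V⦄, s(i, j) ∈ F → τ i = τ j then 1 else 0

open scoped Classical in
lemma prod_eDelta_eq {q : ℕ} (F : Finset (Sym2 V)) (τ : V → Fin q) :
    ∏ e ∈ F, eDelta τ e = consInd F τ := by
  unfold consInd
  split
  · next h =>
    refine Finset.prod_eq_one fun e he => ?_
    induction e using Sym2.ind with
    | _ i j => simpa [eDelta] using h he
  · next h =>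
    push_neg at h
    obtain ⟨i, j, hij, hne⟩ := h
    refine Finset.prod_eq_zero hij ?_
    simp [eDelta, hne]

lemma cons_apply_eq {G : SimpleGraph V} {F : Finset (Sym2 V)} {S : Type} {τ : V → S}
    (hτ : ∀ ⦃i j : V⦄, s(i, j) ∈ F → τ i = τ j) {i j : V}
    (h : (openSub G F).connectedComponentMk i = (openSub G F).connectedComponentMk j) :
    τ i = τ j := by
  obtain ⟨w⟩ := SimpleGraph.ConnectedComponent.exact h
  clear h
  induction w with
  | nil => rfl
  | cons h' p ih => exact (hτ h'.2).trans ih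

lemma sum_comp_partition [Fintype V] (H : SimpleGraph V) (g : V → ℝ) :
    ∑ i : V, g i = ∑ c : H.ConnectedComponent, ∑ i ∈ compSupp H c, g i := by
  classical
  rw [← Finset.sum_fiberwise Finset.univ H.connectedComponentMk g]
  exact Finset.sum_congr rfl fun c _ => Finset.sum_congr
    (Finset.ext fun v => by simp [mem_compSupp]) fun _ _ => rfl

open scoped Classical in
lemma sum_consistent [Fintype V] [DecidableEq V] {G : SimpleGraph V} {F : Finset (Sym2 V)}
    [DecidableRel G.Adj] (hF : F ⊆ G.edgeFinset) {q : ℕ} (u : (V → Fin q) → ℝ) :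
    ∑ τ : V → Fin q, consInd F τ * u τ
      = ∑ ℓ : (openSub G F).ConnectedComponent → Fin q,
          u (fun v => ℓ ((openSub G F).connectedComponentMk v)) := by
  classical
  have h1 : ∀ τ : V → Fin q, consInd F τ * u τ
      = if (∀ ⦃i j : V⦄, s(i, j) ∈ F → τ i = τ j) then u τ else 0 := by
    intro τ
    unfold consInd
    split <;> simp
  rw [Finset.sum_congr rfl fun τ _ => h1 τ, ← Finset.sum_filter]
  refine Finset.sum_nbij' (fun τ => fun c => τ c.out)
    (fun ℓ => fun v => ℓ ((openSub G F).connectedComponentMk v))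
    (fun τ _ => Finset.mem_univ _) ?_ ?_ ?_ ?_
  · intro ℓ _
    rw [Finset.mem_filter]
    refine ⟨Finset.mem_univ _, fun i j hij => ?_⟩
    have hadj : (openSub G F).Adj i j :=
      ⟨(G.mem_edgeSet).mp (SimpleGraph.mem_edgeFinset.mp (hF hij)), hij⟩
    exact congrArg ℓ (SimpleGraph.ConnectedComponent.connectedComponentMk_eq_of_adj hadj)
  · intro τ hτ
    funext v
    have hc : (openSub G F).connectedComponentMk
        ((openSub G F).connectedComponentMk v).out
        = (openSub G F).connectedComponentMk v := Quot.out_eq _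
    exact cons_apply_eq (Finset.mem_filter.mp hτ).2 hc
  · intro ℓ _
    funext c
    exact congrArg ℓ (Quot.out_eq c)
  · intro τ hτ
    congr 1
    funext v
    have hc : (openSub G F).connectedComponentMk
        ((openSub G F).connectedComponentMk v).out
        = (openSub G F).connectedComponentMk v := Quot.out_eq _
    exact (cons_apply_eq (Finset.mem_filter.mp hτ).2 hc).symm

open scoped Classical in
lemma core_sum [Fintype V] [DecidableEq V] (G : SimpleGraph V) [DecidableRel G.Adj]
    (q : ℕ) (β : ℝ) (hh : V → Fin q → ℝ) (x : V) (m : Fin q)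
    {F : Finset (Sym2 V)} (hF : F ⊆ G.edgeFinset) :
    ∑ τ : V → Fin q, (if τ x = m then (1:ℝ) else 0) *
        (consInd F τ * Real.exp (β * ∑ i, hh i (τ i)))
      = Real.exp (β * ∑ i ∈ Kcomp G F x, hh i m) *
        ∏ c ∈ Finset.univ.erase ((openSub G F).connectedComponentMk x),
          ∑ r : Fin q, Real.exp (β * ∑ i ∈ compSupp (openSub G F) c, hh i r) := by
  classical
  have hcomm : ∀ τ : V → Fin q, (if τ x = m then (1:ℝ) else 0) *
      (consInd F τ * Real.exp (β * ∑ i, hh i (τ i)))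
      = consInd F τ *
        ((if τ x = m then (1:ℝ) else 0) * Real.exp (β * ∑ i, hh i (τ i))) := by
    intro τ; ring
  have hsc := sum_consistent hF (fun τ : V → Fin q => (if τ x = m then (1:ℝ) else 0) *
        Real.exp (β * ∑ i, hh i (τ i)))
  refine ((Finset.sum_congr rfl fun τ _ => hcomm τ).trans (hsc.trans ?_))
  have hval : ∀ ℓ : (openSub G F).ConnectedComponent → Fin q,
      (if ℓ ((openSub G F).connectedComponentMk x) = m then (1:ℝ) else 0) *
        Real.exp (β * ∑ i, hh i (ℓ ((openSub G F).connectedComponentMk i)))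
      = (if ℓ ((openSub G F).connectedComponentMk x) = m then (1:ℝ) else 0) *
        ∏ c : (openSub G F).ConnectedComponent,
          Real.exp (β * ∑ i ∈ compSupp (openSub G F) c, hh i (ℓ c)) := by
    intro ℓ
    congr 1
    rw [sum_comp_partition (openSub G F) (fun i => hh i (ℓ ((openSub G F).connectedComponentMk i)))]
    rw [Finset.mul_sum, Real.exp_sum]
    refine Finset.prod_congr rfl fun c _ => ?_
    congr 1
    refine congrArg (β * ·) (Finset.sum_congr rfl fun i hi => ?_)
    rw [mem_compSupp.mp hi]
  rw [Finset.sum_congr rfl fun ℓ _ => hval ℓ]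
  exact aux_fixed (fun c r => Real.exp (β * ∑ i ∈ compSupp (openSub G F) c, hh i r))
    ((openSub G F).connectedComponentMk x) m

open scoped Classical in
lemma potts_expand [Fintype V] [DecidableEq V] (G : SimpleGraph V) [DecidableRel G.Adj]
    (q : ℕ) (hq : 1 ≤ q) (β : ℝ) (J : Sym2 V → ℝ) (hh : V → Fin q → ℝ)
    (p : Sym2 V → ℝ) (hp : ∀ e, p e = 1 - Real.exp (-(q * β) * J e)) (τ : V → Fin q) :
    pottsWq G q β J hh τ
      = Real.exp ((q * β) * ∑ e ∈ G.edgeFinset, J e) *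
        ((∑ F ∈ G.edgeFinset.powerset, bern G p F * consInd F τ)
          * Real.exp (β * ∑ i, hh i (τ i))) := by
  classical
  have hq0 : (q : ℝ) ≠ 0 := by positivity
  -- simplify the field contribution
  have hfield : ∑ r : Fin q, ∑ i, hh i r / q * (if τ i = r then 1 else 0)
      = (∑ i, hh i (τ i)) / q := by
    rw [Finset.sum_comm, Finset.sum_div]
    refine Finset.sum_congr rfl fun i _ => ?_
    rw [Finset.sum_eq_single (τ i)]
    · simp
    · intro r _ hr; simp [Ne.symm hr]
    · simp
  have hexp : -((q : ℝ) * β) *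
      (-(∑ e ∈ G.edgeFinset, J e * eDelta τ e) - (∑ i, hh i (τ i)) / q)
      = (∑ e ∈ G.edgeFinset, ((q : ℝ) * β) * (J e * eDelta τ e))
        + β * ∑ i, hh i (τ i) := by
    rw [← Finset.mul_sum]
    field_simp
    ring
  rw [pottsWq, hfield, hexp, Real.exp_add, Real.exp_sum]
  have hedge : ∀ e ∈ G.edgeFinset,
      Real.exp ((q : ℝ) * β * (J e * eDelta τ e))
      = Real.exp ((q : ℝ) * β * J e) * ((p e * eDelta τ e) + (1 - p e)) := by
    intro e _
    induction e using Sym2.ind with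
    | _ i j =>
      by_cases h : τ i = τ j
      · simp [eDelta, h]
      · have hδ : eDelta τ s(i, j) = 0 := by simp [eDelta, h]
        rw [hδ, hp]
        have h2 : (q : ℝ) * β * (J s(i, j) * 0) = 0 := by ring
        rw [h2, Real.exp_zero, mul_zero, zero_add, sub_sub_cancel, ← Real.exp_add]
        have h3 : (q : ℝ) * β * J s(i, j) + -((q : ℝ) * β) * J s(i, j) = 0 := by ring
        rw [h3, Real.exp_zero]
  have hprod : ∏ e ∈ G.edgeFinset, Real.exp ((q : ℝ) * β * (J e * eDelta τ e))
      = Real.exp ((q * β) * ∑ e ∈ G.edgeFinset, J e) *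
        ∑ F ∈ G.edgeFinset.powerset, bern G p F * consInd F τ := by
    rw [Finset.prod_congr rfl hedge, Finset.prod_mul_distrib, ← Real.exp_sum,
        ← Finset.mul_sum, Finset.prod_add]
    congr 1
    refine Finset.sum_congr rfl fun F hF => ?_
    rw [Finset.prod_mul_distrib, prod_eDelta_eq, bern]
    ring
  rw [hprod]
  ring

open scoped Classical in
lemma numer_eq [Fintype V] [DecidableEq V] (G : SimpleGraph V) [DecidableRel G.Adj]
    (q : ℕ) (hq : 1 ≤ q) (β : ℝ) (J : Sym2 V → ℝ) (hh : V → Fin q → ℝ)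
    (p : Sym2 V → ℝ) (hp : ∀ e, p e = 1 - Real.exp (-(q * β) * J e))
    (x : V) (m : Fin q) :
    ∑ τ ∈ Finset.univ.filter (fun τ : V → Fin q => τ x = m), pottsWq G q β J hh τ
      = Real.exp ((q * β) * ∑ e ∈ G.edgeFinset, J e) *
        ∑ F ∈ G.edgeFinset.powerset,
          (Real.exp (β * ∑ i ∈ Kcomp G F x, hh i m) /
              ∑ r : Fin q, Real.exp (β * ∑ i ∈ Kcomp G F x, hh i r)) *
            grcW G q β p hh F := by
  classical
  rw [Finset.sum_filter]
  have h1 : ∀ τ : V → Fin q, (if τ x = m then pottsWq G q β J hh τ else 0)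
      = Real.exp ((q * β) * ∑ e ∈ G.edgeFinset, J e) *
        ∑ F ∈ G.edgeFinset.powerset,
          bern G p F * ((if τ x = m then (1:ℝ) else 0) *
            (consInd F τ * Real.exp (β * ∑ i, hh i (τ i)))) := by
    intro τ
    by_cases h : τ x = m
    · rw [if_pos h, potts_expand G q hq β J hh p hp τ, Finset.sum_mul]
      congr 1
      refine Finset.sum_congr rfl fun F _ => ?_
      rw [if_pos h]; ring
    · rw [if_neg h]
      have hz : ∀ F ∈ G.edgeFinset.powerset,
          bern G p F * ((if τ x = m then (1:ℝ) else 0) *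
            (consInd F τ * Real.exp (β * ∑ i, hh i (τ i)))) = 0 := by
        intro F _; rw [if_neg h]; ring
      rw [Finset.sum_congr rfl hz, Finset.sum_const_zero, mul_zero]
  rw [Finset.sum_congr rfl fun τ _ => h1 τ, ← Finset.mul_sum]
  congr 1
  rw [Finset.sum_comm]
  refine Finset.sum_congr rfl fun F hF => ?_
  have hF' : F ⊆ G.edgeFinset := Finset.mem_powerset.mp hF
  rw [← Finset.mul_sum, core_sum G q β hh x m hF']
  -- now `bern * (exp * ∏erase) = (exp / Σ) * grcW`
  have hpos : (0:ℝ) < ∑ r : Fin q, Real.exp (β * ∑ i ∈ Kcomp G F x, hh i r) := by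
    have : Nonempty (Fin q) := ⟨⟨0, hq⟩⟩
    exact Finset.sum_pos (fun r _ => Real.exp_pos _) Finset.univ_nonempty
  rw [grcW, ← Finset.mul_prod_erase Finset.univ
      (fun c => ∑ r : Fin q, Real.exp (β * ∑ i ∈ compSupp (openSub G F) c, hh i r))
      (Finset.mem_univ ((openSub G F).connectedComponentMk x))]
  unfold Kcomp at hpos ⊢
  rw [div_mul_eq_mul_div, eq_div_iff (ne_of_gt hpos)]
  ring

open scoped Classical in
/-- Proposition (single-spin marginal of the general `q`-state Potts model). -/
theorem statement13 [Fintype V] [DecidableEq V]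
    (G : SimpleGraph V) [DecidableRel G.Adj]
    (q : ℕ) (hq : 1 ≤ q) (β : ℝ) (hβ : 0 < β)
    (J : Sym2 V → ℝ) (hJ : ∀ e ∈ G.edgeFinset, 0 ≤ J e)
    (hh : V → Fin q → ℝ)
    (p : Sym2 V → ℝ) (hp : ∀ e, p e = 1 - Real.exp (-(q * β) * J e))
    (x : V) (m : Fin q) :
    (∑ τ ∈ Finset.univ.filter (fun τ : V → Fin q => τ x = m),
          pottsWq G q β J hh τ) / (∑ τ : V → Fin q, pottsWq G q β J hh τ)
      = grcE G q β p hh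
          (fun F => Real.exp (β * ∑ i ∈ Kcomp G F x, hh i m) /
            ∑ r : Fin q, Real.exp (β * ∑ i ∈ Kcomp G F x, hh i r)) := by
  classical
  have hdenom : ∑ τ : V → Fin q, pottsWq G q β J hh τ
      = Real.exp ((q * β) * ∑ e ∈ G.edgeFinset, J e) *
        ∑ F ∈ G.edgeFinset.powerset, grcW G q β p hh F := by
    rw [← Finset.sum_fiberwise Finset.univ (fun τ : V → Fin q => τ x)
      (pottsWq G q β J hh)]
    have := fun m' : Fin q => numer_eq G q hq β J hh p hp x m'
    rw [Finset.sum_congr rfl fun m' _ => this m', ← Finset.mul_sum]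
    congr 1
    rw [Finset.sum_comm]
    refine Finset.sum_congr rfl fun F _ => ?_
    rw [← Finset.sum_mul]
    have hpos : (0:ℝ) < ∑ r : Fin q, Real.exp (β * ∑ i ∈ Kcomp G F x, hh i r) := by
      have : Nonempty (Fin q) := ⟨⟨0, hq⟩⟩
      exact Finset.sum_pos (fun r _ => Real.exp_pos _) Finset.univ_nonempty
    rw [← Finset.sum_div, div_self (ne_of_gt hpos), one_mul]
  rw [numer_eq G q hq β J hh p hp x m, hdenom, grcE,
      mul_div_mul_left _ _ (ne_of_gt (Real.exp_pos _))]

end
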